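/- Let q ≥ 0 be an integer and L, r_0 > 0. Let B : (r_0, ∞) → ℝ be measurable with B(r) ≥ L²/r² for all r > r_0, and let h : (r_0, ∞) → ℝ satisfy (r_0/r)^(2q+2) < h(r) ≤ 1 for all r > r_0. Suppose ℛ := L ∫_{r_0}^∞ √(B(r)) / (r · √((r/r_0)^(2q+2) · h(r) − 1)) dr is finite. Then L²/r_0 ≤ [Γ(1/(2(q+1))) / (√π · Γ((q+2)/(2(q+1))))] · ℛ. -/

import Mathlib

open MeasureTheory

lemma real_beta (a b : ℝ) (ha : 0 < a) (hb : 0 < b) :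
    ∫ x in (0:ℝ)..1, x ^ (a-1) * (1-x) ^ (b-1)
      = Real.Gamma a * Real.Gamma b / Real.Gamma (a+b) := by
  have hG : (0:ℝ) < Real.Gamma (a+b) := Real.Gamma_pos_of_pos (by linarith)
  have key := Complex.Gamma_mul_Gamma_eq_betaIntegral (s := (a:ℂ)) (t := (b:ℂ))
    (by simpa using ha) (by simpa using hb)
  have hbeta : Complex.betaIntegral (a:ℂ) (b:ℂ)
      = ((∫ x in (0:ℝ)..1, x ^ (a-1) * (1-x) ^ (b-1) : ℝ) : ℂ) := by
    rw [Complex.betaIntegral, ← intervalIntegral.integral_ofReal]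
    apply intervalIntegral.integral_congr
    intro x hx
    rw [Set.uIcc_of_le (by norm_num : (0:ℝ) ≤ 1)] at hx
    have hx0 : (0:ℝ) ≤ x := hx.1
    have hx1 : (0:ℝ) ≤ 1 - x := by linarith [hx.2]
    simp only [Complex.ofReal_mul, Complex.ofReal_cpow hx0, Complex.ofReal_cpow hx1]
    push_cast
    ring_nf
  rw [hbeta] at key
  rw [← Complex.ofReal_add, Complex.Gamma_ofReal, Complex.Gamma_ofReal, Complex.Gamma_ofReal] at key
  have := congrArg Complex.re key
  simp [Complex.ofReal_mul] at this
  rw [eq_div_iff hG.ne']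
  push_cast at this
  linarith [this]


lemma g_int (q : ℕ) (L r₀ : ℝ) (hL : 0 < L) (hr₀ : 0 < r₀) :
    ∫ r in Set.Ioi r₀, L / (r ^ 2 * Real.sqrt ((r / r₀) ^ (2 * q + 2) - 1))
      = L / r₀ * ((∫ x in (0:ℝ)..1,
          x ^ (1 / (2 * ((q:ℝ) + 1)) + 1/2 - 1) * (1-x) ^ ((1/2:ℝ) - 1)) * (1 / (2 * ((q:ℝ) + 1)))) := by
  set a : ℝ := 1 / (2 * ((q:ℝ) + 1)) with ha_def
  have hq1 : (0:ℝ) < 2 * ((q:ℝ) + 1) := by positivity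
  have ha_pos : 0 < a := by positivity
  have ha_mul : a * ((2 * q + 2 : ℕ) : ℝ) = 1 := by
    rw [ha_def]; push_cast; field_simp
  set φ : ℝ → ℝ := fun t => r₀ * t ^ (-a) with hφ_def
  set φ' : ℝ → ℝ := fun t => r₀ * (-a * t ^ (-a - 1)) with hφ'_def
  have hderiv : ∀ t ∈ Set.Ioo (0:ℝ) 1, HasDerivWithinAt φ (φ' t) (Set.Ioo (0:ℝ) 1) t := by
    intro t ht
    exact ((Real.hasDerivAt_rpow_const (Or.inl ht.1.ne')).const_mul r₀).hasDerivWithinAt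
  have hinj : Set.InjOn φ (Set.Ioo (0:ℝ) 1) := by
    intro s hs t ht hst
    have h1 : s ^ (-a) = t ^ (-a) := by
      have := mul_left_cancel₀ hr₀.ne' hst
      exact this
    have h2 : (s ^ (-a)) ^ (-a)⁻¹ = (t ^ (-a)) ^ (-a)⁻¹ := by rw [h1]
    rwa [← Real.rpow_mul hs.1.le, ← Real.rpow_mul ht.1.le,
      mul_inv_cancel₀ (by simpa using ha_pos.ne' : (-a) ≠ 0), Real.rpow_one, Real.rpow_one] at h2
  have himg : φ '' Set.Ioo (0:ℝ) 1 = Set.Ioi r₀ := by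
    ext y
    simp only [Set.mem_image, Set.mem_Ioi, Set.mem_Ioo]
    constructor
    · rintro ⟨t, ⟨ht0, ht1⟩, rfl⟩
      have : (1:ℝ) < t ^ (-a) := by
        rw [show (1:ℝ) = (1:ℝ) ^ (-a) by simp]
        exact Real.rpow_lt_rpow_of_neg ht0 ht1 (by linarith)
      calc r₀ = r₀ * 1 := by ring
        _ < r₀ * t ^ (-a) := by nlinarith
    · intro hy
      have hy0 : (0:ℝ) < y / r₀ := div_pos (hr₀.trans hy) hr₀
      refine ⟨(y / r₀) ^ (-a⁻¹), ⟨Real.rpow_pos_of_pos hy0 _, ?_⟩, ?_⟩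
      · have h1 : (1:ℝ) < y / r₀ := (one_lt_div hr₀).2 hy
        calc (y / r₀) ^ (-a⁻¹) < 1 ^ (-a⁻¹) := by
              apply Real.rpow_lt_rpow_of_neg one_pos h1
              simp [ha_pos]
          _ = 1 := by simp
      · rw [hφ_def]
        simp only
        rw [← Real.rpow_mul hy0.le]
        rw [show -a⁻¹ * -a = 1 by field_simp]
        rw [Real.rpow_one]
        field_simp
  have hchg := integral_image_eq_integral_abs_deriv_smul measurableSet_Ioo hderiv hinj
    (fun r => L / (r ^ 2 * Real.sqrt ((r / r₀) ^ (2 * q + 2) - 1)))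
  rw [himg] at hchg
  rw [hchg]
  have hcongr : ∀ t ∈ Set.Ioo (0:ℝ) 1,
      |φ' t| • (L / ((φ t) ^ 2 * Real.sqrt ((φ t / r₀) ^ (2 * q + 2) - 1)))
        = (L / r₀ * a) * (t ^ (a + 1/2 - 1) * (1-t) ^ ((1/2:ℝ) - 1)) := by
    intro t ht
    obtain ⟨ht0, ht1⟩ := ht
    have htne : t ≠ 0 := ht0.ne'
    have h1t : (0:ℝ) < 1 - t := by linarith
    have hbase : φ t / r₀ = t ^ (-a) := by
      simp only [hφ_def]; rw [mul_comm, mul_div_assoc, div_self hr₀.ne', mul_one]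
    have hpow : (φ t / r₀) ^ (2 * q + 2) = t⁻¹ := by
      rw [hbase]
      rw [← Real.rpow_natCast (t ^ (-a)) (2 * q + 2), ← Real.rpow_mul ht0.le]
      rw [show -a * ((2 * q + 2 : ℕ) : ℝ) = -1 by rw [← ha_mul]; ring]
      exact Real.rpow_neg_one t
    rw [hpow]
    have hsqrt : Real.sqrt (t⁻¹ - 1) = (1-t) ^ ((1/2:ℝ)) / t ^ ((1/2:ℝ)) := by
      rw [show t⁻¹ - 1 = (1-t)/t by field_simp]
      rw [Real.sqrt_div h1t.le, Real.sqrt_eq_rpow, Real.sqrt_eq_rpow]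
    rw [hsqrt]
    have habs : |φ' t| = r₀ * (a * t ^ (-a - 1)) := by
      simp only [hφ'_def]
      rw [abs_mul, abs_of_pos hr₀, abs_mul, abs_neg, abs_of_pos ha_pos,
        abs_of_pos (Real.rpow_pos_of_pos ht0 _)]
    have hsq : φ t ^ 2 = r₀ ^ 2 * t ^ (-(2*a)) := by
      simp only [hφ_def]
      rw [mul_pow, ← Real.rpow_natCast (t ^ (-a)) 2, ← Real.rpow_mul ht0.le,
        show (-a) * ((2:ℕ):ℝ) = -(2*a) by push_cast; ring]
    have hT : t ^ (-a-1) * t ^ ((1/2:ℝ)) * (t ^ (-(2*a)))⁻¹ = t ^ (a + 1/2 - 1) := by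
      rw [← Real.rpow_neg ht0.le, ← Real.rpow_add ht0, ← Real.rpow_add ht0]
      ring_nf
    have h2 : (0:ℝ) < t ^ (-(2*a)) := Real.rpow_pos_of_pos ht0 _
    have h3 : (0:ℝ) < t ^ ((1/2:ℝ)) := Real.rpow_pos_of_pos ht0 _
    have h4 : (0:ℝ) < (1-t) ^ ((1/2:ℝ)) := Real.rpow_pos_of_pos h1t _
    rw [habs, hsq, smul_eq_mul, show (1/2:ℝ) - 1 = -(1/2) by norm_num,
      Real.rpow_neg h1t.le, ← hT]
    field_simp
  rw [MeasureTheory.setIntegral_congr_fun measurableSet_Ioo hcongr]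
  rw [MeasureTheory.integral_const_mul]
  rw [← MeasureTheory.integral_Ioc_eq_integral_Ioo,
    ← intervalIntegral.integral_of_le (by norm_num : (0:ℝ) ≤ 1)]
  ring



/-- Tip-radius bound for a `(q+1)`-dimensional extremal surface anchored at a
boundary sphere of radius `ℛ = L ∫_{r₀}^∞ √B(r)/(r √((r/r₀)^(2q+2) h(r) − 1)) dr`,
assuming `B(r) ≥ L²/r²` and `(r₀/r)^(2q+2) < h(r) ≤ 1`. -/
theorem sphere_tip_radius_bound
    (q : ℕ) (L r₀ : ℝ) (hL : 0 < L) (hr₀ : 0 < r₀)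
    (B h : ℝ → ℝ) (hBmeas : Measurable B)
    (hBlb : ∀ r ∈ Set.Ioi r₀, L ^ 2 / r ^ 2 ≤ B r)
    (hh : ∀ r ∈ Set.Ioi r₀, (r₀ / r) ^ (2 * q + 2) < h r ∧ h r ≤ 1)
    (hInt : IntegrableOn
      (fun r : ℝ => Real.sqrt (B r) / (r * Real.sqrt ((r / r₀) ^ (2 * q + 2) * h r - 1)))
      (Set.Ioi r₀))
    (ℛ : ℝ)
    (hℛ : ℛ = L * ∫ r in Set.Ioi r₀,
      Real.sqrt (B r) / (r * Real.sqrt ((r / r₀) ^ (2 * q + 2) * h r - 1))) :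
    L ^ 2 / r₀ ≤ (Real.Gamma (1 / (2 * ((q : ℝ) + 1))) /
      (Real.sqrt Real.pi * Real.Gamma (((q : ℝ) + 2) / (2 * ((q : ℝ) + 1))))) * ℛ := by
  set a : ℝ := 1 / (2 * ((q:ℝ) + 1)) with ha_def
  have ha_pos : 0 < a := by positivity
  -- pointwise bound
  have hpt : ∀ r ∈ Set.Ioi r₀,
      L / (r ^ 2 * Real.sqrt ((r / r₀) ^ (2 * q + 2) - 1))
        ≤ Real.sqrt (B r) / (r * Real.sqrt ((r / r₀) ^ (2 * q + 2) * h r - 1)) := by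
    intro r hr
    rw [Set.mem_Ioi] at hr
    have hr0 : 0 < r := hr₀.trans hr
    obtain ⟨hh1, hh2⟩ := hh r (Set.mem_Ioi.2 hr)
    have hpow : (0:ℝ) < (r / r₀) ^ (2 * q + 2) := by positivity
    have hY : (0:ℝ) < (r / r₀) ^ (2 * q + 2) - 1 := by
      have : (1:ℝ) < (r / r₀) ^ (2 * q + 2) :=
        one_lt_pow₀ ((one_lt_div hr₀).2 hr) (by omega)
      linarith
    have hX : (0:ℝ) < (r / r₀) ^ (2 * q + 2) * h r - 1 := by
      have h1 : (r / r₀) ^ (2 * q + 2) * ((r₀ / r) ^ (2 * q + 2))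
          < (r / r₀) ^ (2 * q + 2) * h r := by
        exact mul_lt_mul_of_pos_left hh1 hpow
      have h2 : (r / r₀) ^ (2 * q + 2) * ((r₀ / r) ^ (2 * q + 2)) = 1 := by
        rw [← mul_pow, div_mul_div_comm]
        rw [show r * r₀ / (r₀ * r) = 1 by field_simp]
        exact one_pow _
      linarith
    have hXY : (r / r₀) ^ (2 * q + 2) * h r - 1 ≤ (r / r₀) ^ (2 * q + 2) - 1 := by
      nlinarith
    have hsX : (0:ℝ) < Real.sqrt ((r / r₀) ^ (2 * q + 2) * h r - 1) := Real.sqrt_pos.2 hX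
    have hsY : (0:ℝ) < Real.sqrt ((r / r₀) ^ (2 * q + 2) - 1) := Real.sqrt_pos.2 hY
    have h1 : Real.sqrt ((r / r₀) ^ (2 * q + 2) * h r - 1)
        ≤ Real.sqrt ((r / r₀) ^ (2 * q + 2) - 1) := Real.sqrt_le_sqrt hXY
    have h2 : L / r ≤ Real.sqrt (B r) := by
      have e : L ^ 2 / r ^ 2 = (L / r) ^ 2 := by ring
      have := Real.sqrt_le_sqrt (hBlb r (Set.mem_Ioi.2 hr))
      rwa [e, Real.sqrt_sq (by positivity)] at this
    have h2' : L ≤ Real.sqrt (B r) * r := (div_le_iff₀ hr0).1 h2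
    have hsB : (0:ℝ) ≤ Real.sqrt (B r) := Real.sqrt_nonneg _
    rw [div_le_div_iff₀ (by positivity) (by positivity)]
    nlinarith [mul_le_mul_of_nonneg_right h2'
        (mul_nonneg hr0.le hsX.le),
      mul_le_mul_of_nonneg_left h1 (mul_nonneg hsB (sq_nonneg r))]
  -- integral comparison
  have hmono : (∫ r in Set.Ioi r₀, L / (r ^ 2 * Real.sqrt ((r / r₀) ^ (2 * q + 2) - 1)))
      ≤ ∫ r in Set.Ioi r₀,
        Real.sqrt (B r) / (r * Real.sqrt ((r / r₀) ^ (2 * q + 2) * h r - 1)) := by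
    apply integral_mono_of_nonneg
    · exact ae_of_all _ fun r => div_nonneg hL.le (by positivity)
    · exact hInt
    · exact (ae_restrict_iff' measurableSet_Ioi).2 (ae_of_all _ hpt)
  have hg := g_int q L r₀ hL hr₀
  have hbeta := real_beta (a + 1/2) (1/2) (by positivity) (by norm_num)
  rw [show a + 1/2 + 1/2 = a + 1 by ring, Real.Gamma_add_one ha_pos.ne',
    Real.Gamma_one_half_eq] at hbeta
  rw [hbeta] at hg
  have hGa : (0:ℝ) < Real.Gamma a := Real.Gamma_pos_of_pos ha_pos
  have hGa2 : (0:ℝ) < Real.Gamma (a + 1/2) := Real.Gamma_pos_of_pos (by positivity)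
  have hpi : (0:ℝ) < Real.sqrt Real.pi := Real.sqrt_pos.2 Real.pi_pos
  have heq : ((q:ℝ) + 2) / (2 * ((q:ℝ) + 1)) = a + 1/2 := by
    rw [ha_def]; field_simp; ring
  rw [heq]
  have hC : (0:ℝ) < Real.sqrt Real.pi * Real.Gamma (a + 1/2) / Real.Gamma a := by positivity
  have key : L ^ 2 / r₀ * (Real.sqrt Real.pi * Real.Gamma (a + 1/2) / Real.Gamma a) ≤ ℛ := by
    rw [hℛ]
    calc L ^ 2 / r₀ * (Real.sqrt Real.pi * Real.Gamma (a + 1/2) / Real.Gamma a)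
        = L * (L / r₀ * (Real.Gamma (a + 1/2) * Real.sqrt Real.pi / (a * Real.Gamma a) * a)) := by
          field_simp
      _ ≤ L * ∫ r in Set.Ioi r₀,
            Real.sqrt (B r) / (r * Real.sqrt ((r / r₀) ^ (2 * q + 2) * h r - 1)) := by
          rw [← hg]; exact mul_le_mul_of_nonneg_left hmono hL.le
  have hKC : Real.Gamma a / (Real.sqrt Real.pi * Real.Gamma (a + 1/2))
      * (Real.sqrt Real.pi * Real.Gamma (a + 1/2) / Real.Gamma a) = 1 := by
    field_simp
  calc L ^ 2 / r₀
      = L ^ 2 / r₀ * ((Real.sqrt Real.pi * Real.Gamma (a + 1/2) / Real.Gamma a)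
          * (Real.Gamma a / (Real.sqrt Real.pi * Real.Gamma (a + 1/2)))) := by
        rw [mul_comm (Real.sqrt Real.pi * Real.Gamma (a + 1/2) / Real.Gamma a), hKC, mul_one]
    _ = (L ^ 2 / r₀ * (Real.sqrt Real.pi * Real.Gamma (a + 1/2) / Real.Gamma a))
          * (Real.Gamma a / (Real.sqrt Real.pi * Real.Gamma (a + 1/2))) := by ring
    _ ≤ ℛ * (Real.Gamma a / (Real.sqrt Real.pi * Real.Gamma (a + 1/2))) :=
        mul_le_mul_of_nonneg_right key (by positivity)
    _ = Real.Gamma a / (Real.sqrt Real.pi * Real.Gamma (a + 1/2)) * ℛ := mul_comm _ _
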